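/- arXiv:2604.02874 — 5 statements merged into one kernel-verified Lean document; each statement's English description precedes it below -/
import Mathlib

section
/- Let f : ℝ → ℂ be a Schwartz function, let a > 0 and δ ∈ ℝ. Then (1/a) · Σ_{k ∈ ℤ} f(k/a) · e^{-2πi k δ / a} = Σ_{n ∈ ℤ} f̂(a n + δ), where both bilateral series converge absolutely. -/
open MeasureTheory Complex
open scoped Real FourierTransform

private lemma htg_affine (a δ : ℝ) : Function.HasTemperateGrowth (fun x : ℝ => a * x + δ) := by
  apply Function.HasTemperateGrowth.of_fderiv (k := 1) (C := |a| + |δ|)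
  · have h : (fderiv ℝ (fun x : ℝ => a * x + δ)) = fun _ =>
        ContinuousLinearMap.smulRight (1 : ℝ →L[ℝ] ℝ) a := by
      funext x
      have h2 : HasDerivAt (fun x : ℝ => a * x + δ) a x := by
        simpa using ((hasDerivAt_id x).const_mul a).add_const δ
      exact h2.hasFDerivAt.fderiv
    rw [h]
    exact Function.HasTemperateGrowth.const _
  · exact (differentiable_id.const_mul a).add_const δ
  · intro x
    have : |a * x + δ| ≤ |a| * |x| + |δ| := (abs_add_le _ _).trans (by rw [abs_mul])
    simp only [Real.norm_eq_abs]
    nlinarith [abs_nonneg a, abs_nonneg δ, abs_nonneg x]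

/-- Composition of a Schwartz function with a nondegenerate affine map. -/
private noncomputable def affComp (a δ : ℝ) (ha : a ≠ 0) (h : SchwartzMap ℝ ℂ) :
    SchwartzMap ℝ ℂ :=
  SchwartzMap.compCLM ℝ (htg_affine a δ)
    ⟨1, (1 + |δ|) / |a|, by
      intro x
      have ha' : 0 < |a| := abs_pos.mpr ha
      simp only [Real.norm_eq_abs]
      rw [div_mul_eq_mul_div, le_div_iff₀ ha']
      have h1 : |a| * |x| = |a * x| := (abs_mul a x).symm
      have h2 : |a * x| ≤ |a * x + δ| + |δ| := by
        calc |a * x| = |(a * x + δ) - δ| := by ring_nf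
        _ ≤ |a * x + δ| + |δ| := abs_sub _ _
      have h3 : (0:ℝ) ≤ |a * x + δ| := abs_nonneg _
      have h4 : (0:ℝ) ≤ |δ| := abs_nonneg _
      nlinarith⟩ h

private lemma affComp_apply (a δ : ℝ) (ha : a ≠ 0) (h : SchwartzMap ℝ ℂ) (x : ℝ) :
    affComp a δ ha h x = h (a * x + δ) := rfl

private lemma schwartz_summable_int (h : SchwartzMap ℝ ℂ) : Summable fun n : ℤ => ‖h n‖ :=
  summable_of_isBigO (Real.summable_abs_int_rpow one_lt_two)
    (((h.isBigO_cocompact_rpow (-2)).norm_left).comp_tendsto Int.tendsto_coe_cofinite)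

/-- Fourier transform of a composition with a nondegenerate affine map. -/
private lemma fourier_affine (G : ℝ → ℂ) {a : ℝ} (ha : 0 < a) (δ ξ : ℝ) :
    𝓕 (fun x : ℝ => G (a * x + δ)) ξ
      = (a⁻¹ : ℂ) * Complex.exp (((2 * π * ξ * δ / a : ℝ) : ℂ) * Complex.I) * 𝓕 G (ξ / a) := by
  rw [Real.fourier_real_eq_integral_exp_smul,
    Real.fourier_real_eq_integral_exp_smul]
  set Φ : ℝ → ℂ := fun u => Complex.exp (((-2 * π * ((u - δ) / a) * ξ : ℝ) : ℂ) * Complex.I) • G u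
    with hΦ
  have step1 : (fun x : ℝ => Complex.exp (((-2 * π * x * ξ : ℝ) : ℂ) * Complex.I) • G (a * x + δ))
      = fun x : ℝ => Φ (a * x + δ) := by
    funext x
    simp only [hΦ]
    congr 3
    rw [add_sub_cancel_right, mul_div_cancel_left₀ _ ha.ne']
  rw [step1]
  have step2 : (∫ x : ℝ, Φ (a * x + δ)) = ∫ x : ℝ, (fun y => Φ (y + δ)) (a * x) := by rfl
  rw [step2, Measure.integral_comp_mul_left (fun y => Φ (y + δ)) a,
    MeasureTheory.integral_add_right_eq_self Φ δ]
  have step3 : Φ = fun u => Complex.exp (((2 * π * ξ * δ / a : ℝ) : ℂ) * Complex.I) *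
      (Complex.exp (((-2 * π * u * (ξ / a) : ℝ) : ℂ) * Complex.I) • G u) := by
    funext u
    simp only [hΦ, smul_eq_mul, ← mul_assoc, ← Complex.exp_add, ← add_mul, ← Complex.ofReal_add]
    congr 3
    field_simp
    ring
  rw [step3, MeasureTheory.integral_const_mul, abs_of_pos (inv_pos.mpr ha)]
  rw [Complex.real_smul]
  push_cast
  ring

/-- **Poisson summation with scaling and shift for Schwartz functions.**
For a Schwartz function `f : ℝ → ℂ`, `a > 0` and `δ ∈ ℝ`,
`(1/a) ∑_{k ∈ ℤ} f(k/a) e^{-2πikδ/a} = ∑_{n ∈ ℤ} 𝓕f(an + δ)`,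
and both bilateral series converge absolutely. -/
theorem stmt0 (f : SchwartzMap ℝ ℂ) (a δ : ℝ) (ha : 0 < a) :
    Summable (fun k : ℤ =>
      ‖f (k / a) * Complex.exp (-(2 * (π : ℂ) * Complex.I * (k : ℂ) * (δ : ℂ)) / (a : ℂ))‖) ∧
    Summable (fun n : ℤ => ‖𝓕 (fun x : ℝ => f x) (a * n + δ)‖) ∧
    (1 / (a : ℂ)) *
        ∑' k : ℤ, f (k / a) *
          Complex.exp (-(2 * (π : ℂ) * Complex.I * (k : ℂ) * (δ : ℂ)) / (a : ℂ))
      = ∑' n : ℤ, 𝓕 (fun x : ℝ => f x) (a * n + δ) := by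
  have haR : a ≠ 0 := ha.ne'
  set F : SchwartzMap ℝ ℂ := SchwartzMap.fourierTransformCLM ℝ f with hFdef
  set g : SchwartzMap ℝ ℂ := affComp a δ haR F with hgdef
  have hgfun : ∀ x : ℝ, g x = 𝓕 (fun y : ℝ => f y) (a * x + δ) := by
    intro x
    rw [hgdef, affComp_apply, hFdef]
    simp
    rfl
  refine ⟨?_, ?_, ?_⟩
  · -- first summability
    have h1 : ∀ k : ℤ,
        ‖f ((k : ℝ) / a) * Complex.exp (-(2 * (π:ℂ) * I * (k:ℂ) * (δ:ℂ)) / (a:ℂ))‖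
        = ‖(affComp a⁻¹ 0 (inv_ne_zero haR) f) (k : ℝ)‖ := by
      intro k
      rw [norm_mul, affComp_apply]
      have e1 : -(2 * (π:ℂ) * I * (k:ℂ) * (δ:ℂ)) / (a:ℂ)
          = ((-(2 * π * k * δ) / a : ℝ) : ℂ) * I := by push_cast; ring
      rw [e1]
      have e2 : a⁻¹ * (k:ℝ) + 0 = (k:ℝ) / a := by ring
      rw [e2]
      simp [Complex.norm_exp]
    exact (summable_congr h1).mpr (schwartz_summable_int _)
  · -- second summability
    have h2 : ∀ n : ℤ, ‖𝓕 (fun x : ℝ => f x) (a * n + δ)‖ = ‖g (n : ℝ)‖ := fun n => by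
      rw [hgfun]
    exact (summable_congr h2).mpr (schwartz_summable_int g)
  · -- main equality
    have key := SchwartzMap.tsum_eq_tsum_fourier g (0 : ℝ)
    have hL : ∑' n : ℤ, g ((0:ℝ) + n) = ∑' n : ℤ, 𝓕 (fun x : ℝ => f x) (a * n + δ) := by
      refine tsum_congr fun n => ?_
      rw [hgfun]; norm_num
    set H : ℤ → ℂ := fun n =>
      (a⁻¹:ℂ) * Complex.exp (((2*π*(n:ℝ)*δ/a : ℝ):ℂ) * I) * f (-((n:ℝ)/a)) with hH
    have hR : ∀ n : ℤ,
        SchwartzMap.fourierTransformCLM ℝ g (n:ℝ) * fourier n ((0:ℝ) : UnitAddCircle) = H n := by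
      intro n
      have hfour : fourier n (((0:ℝ)) : UnitAddCircle) = 1 := by
        norm_num [fourier_eval_zero]
      rw [hfour, mul_one, SchwartzMap.fourierTransformCLM_apply, SchwartzMap.fourier_coe]
      have hgc : ⇑g = fun x : ℝ => (⇑F) (a * x + δ) := by
        funext x; rw [hgdef, affComp_apply]
      rw [hgc, fourier_affine (⇑F) ha δ (n:ℝ)]
      have hinv : 𝓕 (⇑F) ((n:ℝ) / a) = f (-((n:ℝ)/a)) := by
        have hFc : ⇑F = 𝓕 (⇑f) := by rw [hFdef]; simp; rfl
        have hi := Continuous.fourierInv_fourier_eq f.continuous f.integrable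
          (by rw [← hFc]; exact F.integrable)
        rw [hFc]
        have : 𝓕 (𝓕 ⇑f) ((n:ℝ)/a) = 𝓕⁻ (𝓕 ⇑f) (-((n:ℝ)/a)) := by
          rw [Real.fourierInv_eq_fourier_neg]; norm_num
        rw [this, hi]
      rw [hinv, hH]
    have hstep : ∑' n : ℤ, 𝓕 (fun x : ℝ => f x) (a * n + δ) = ∑' n : ℤ, H n := by
      rw [← hL, key]
      exact tsum_congr hR
    have hneg : ∑' n : ℤ, H n = ∑' k : ℤ, H (-k) := ((Equiv.neg ℤ).tsum_eq H).symm
    have hterm : ∀ k : ℤ, H (-k)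
        = (a⁻¹:ℂ) * (f ((k:ℝ)/a) *
            Complex.exp (-(2 * (π:ℂ) * I * (k:ℂ) * (δ:ℂ)) / (a:ℂ))) := by
      intro k
      rw [hH]
      simp only [Int.cast_neg]
      rw [show -(-(k:ℝ)/a) = (k:ℝ)/a by ring]
      rw [show ((2*π*(-(k:ℝ))*δ/a : ℝ):ℂ) * I = -(2*(π:ℂ)*I*(k:ℂ)*(δ:ℂ))/(a:ℂ) by
        push_cast; ring]
      ring
    rw [hstep, hneg, tsum_congr hterm, tsum_mul_left, one_div]
end

section
/- Let 0 < R₁ < R₂, let m ≥ 1 be an integer, set w_k = R₁ · exp(2πi k / m), and let λ ∈ ℂ with |λ| < R₁. Let f be holomorphic on an open set containing the closed disk {z : |z| ≤ R₂}. Then (1/m) · Σ_{k=1}^{m} w_k f(w_k) / (w_k - λ) = f(λ) - f(λ) · λ^m / (λ^m - R₁^m) + (1/(2πi)) · ∮_{|z|=R₂} ( R₁^m / (z^m - R₁^m) ) · f(z)/(z - λ) dz, where the last term is the circle integral over the circle of radius R₂ centered at 0. -/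
open Complex
open scoped Real

section Auxx

-- circle integral of a finite sum
lemma circleIntegral_finset_sum {ι : Type*} (s : Finset ι) (F : ι → ℂ → ℂ) (c : ℂ) (R : ℝ)
    (h : ∀ i ∈ s, CircleIntegrable (F i) c R) :
    (∮ z in C(c, R), ∑ i ∈ s, F i z) = ∑ i ∈ s, ∮ z in C(c, R), F i z := by
  simp only [circleIntegral, Finset.smul_sum]
  exact intervalIntegral.integral_finset_sum fun i hi => (h i hi).out

-- product identity
lemma prod_roots (R₁ : ℝ) (m : ℕ) (hm : 1 ≤ m) (z : ℂ) :
    ∏ k ∈ Finset.range m, (z - (R₁ : ℂ) * Complex.exp (2 * (π : ℂ) * Complex.I * (k : ℂ) / (m : ℂ)))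
      = z ^ m - (R₁ : ℂ) ^ m := by
  have hζ : IsPrimitiveRoot (Complex.exp (2 * (π : ℂ) * Complex.I / (m : ℂ))) m :=
    Complex.isPrimitiveRoot_exp m (by omega)
  have e : ((R₁ : ℂ)) ^ m = (R₁ : ℂ) ^ m := rfl
  have hp := X_pow_sub_C_eq_prod hζ (by omega : 0 < m) e
  have hp2 := congrArg (Polynomial.eval z) hp
  simp only [Polynomial.eval_sub, Polynomial.eval_pow, Polynomial.eval_X, Polynomial.eval_C,
    Polynomial.eval_prod, Polynomial.eval_mul] at hp2
  rw [hp2]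
  apply Finset.prod_congr rfl
  intro k _
  congr 1
  rw [← Complex.exp_nat_mul, mul_comm]
  congr 1
  ring

-- notation shortcut inside proofs: w k = R₁ exp(2πik/m)

lemma deriv_sum_identity (R₁ : ℝ) (m : ℕ) (hm : 1 ≤ m) (z : ℂ) :
    ∑ k ∈ Finset.range m, ∏ j ∈ (Finset.range m).erase k,
        (z - (R₁ : ℂ) * Complex.exp (2 * (π : ℂ) * Complex.I * (j : ℂ) / (m : ℂ)))
      = (m : ℂ) * z ^ (m - 1) := by
  set w : ℕ → ℂ := fun k => (R₁ : ℂ) * Complex.exp (2 * (π : ℂ) * Complex.I * (k : ℂ) / (m : ℂ))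
    with hw
  have h1 : HasDerivAt (fun z : ℂ => ∏ k ∈ Finset.range m, (z - w k))
      (∑ k ∈ Finset.range m, (∏ j ∈ (Finset.range m).erase k, (z - w j)) • (1 : ℂ)) z := by
    have := HasDerivAt.finset_prod (u := Finset.range m) (f := fun k (z : ℂ) => z - w k)
      (f' := fun _ => (1 : ℂ)) (x := z) (fun i _ => (hasDerivAt_id z).sub_const (w i))
    exact this.congr_of_eventuallyEq (Filter.Eventually.of_forall fun y => by rw [Finset.prod_apply])
  have h2 : HasDerivAt (fun z : ℂ => z ^ m - (R₁ : ℂ) ^ m) ((m : ℂ) * z ^ (m - 1)) z := by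
    simpa using (hasDerivAt_pow m z).sub_const ((R₁ : ℂ) ^ m)
  have hfun : (fun z : ℂ => ∏ k ∈ Finset.range m, (z - w k))
      = fun z : ℂ => z ^ m - (R₁ : ℂ) ^ m := by
    funext y; exact prod_roots R₁ m hm y
  rw [hfun] at h1
  have := h1.unique h2
  simpa [smul_eq_mul] using this

lemma sum_w_div (R₁ : ℝ) (m : ℕ) (hm : 1 ≤ m) (z : ℂ)
    (hz : z ^ m - (R₁ : ℂ) ^ m ≠ 0) :
    ∑ k ∈ Finset.range m,
        ((R₁ : ℂ) * Complex.exp (2 * (π : ℂ) * Complex.I * (k : ℂ) / (m : ℂ)))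
          / (z - (R₁ : ℂ) * Complex.exp (2 * (π : ℂ) * Complex.I * (k : ℂ) / (m : ℂ)))
      = (m : ℂ) * (R₁ : ℂ) ^ m / (z ^ m - (R₁ : ℂ) ^ m) := by
  set w : ℕ → ℂ := fun k => (R₁ : ℂ) * Complex.exp (2 * (π : ℂ) * Complex.I * (k : ℂ) / (m : ℂ))
    with hw
  set d : ℂ := z ^ m - (R₁ : ℂ) ^ m with hd
  have hprod : ∏ k ∈ Finset.range m, (z - w k) = d := prod_roots R₁ m hm z
  have hnz : ∀ k ∈ Finset.range m, z - w k ≠ 0 := by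
    intro k hk
    have := hprod ▸ hz
    exact fun h0 => this (Finset.prod_eq_zero hk h0)
  have key : ∑ k ∈ Finset.range m, d / (z - w k) = (m : ℂ) * z ^ (m - 1) := by
    rw [← deriv_sum_identity R₁ m hm z]
    refine Finset.sum_congr rfl fun k hk => ?_
    rw [eq_comm, eq_div_iff (hnz k hk)]
    rw [← hprod]
    exact Finset.prod_erase_mul _ _ hk
  have hzm : z * z ^ (m - 1) = z ^ m := by
    conv_rhs => rw [show m = (m - 1) + 1 by omega]
    rw [pow_succ]; ring
  have step : ∑ k ∈ Finset.range m, w k / (z - w k)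
      = z * (∑ k ∈ Finset.range m, d / (z - w k)) / d - (m : ℂ) := by
    rw [Finset.mul_sum, Finset.sum_div]
    rw [show ((m : ℂ)) = ∑ _k ∈ Finset.range m, (1 : ℂ) by simp]
    rw [← Finset.sum_sub_distrib]
    refine Finset.sum_congr rfl fun k hk => ?_
    have h2 : z * (d / (z - w k)) / d = z / (z - w k) := by
      field_simp
    rw [h2, div_sub_one (hnz k hk)]
    congr 1
    ring
  have h3 : z * ((m : ℂ) * z ^ (m - 1)) = (m : ℂ) * z ^ m := by rw [← hzm]; ring
  rw [step, key, h3, eq_div_iff hz, sub_mul, div_mul_cancel₀ _ hz, hd]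
  ring

lemma sum_Icc_eq_sum_range (R₁ : ℝ) (m : ℕ) (hm : 1 ≤ m) (g : ℂ → ℂ) :
    ∑ k ∈ Finset.Icc 1 m, g ((R₁ : ℂ) * Complex.exp (2 * (π : ℂ) * Complex.I * (k : ℂ) / (m : ℂ)))
      = ∑ k ∈ Finset.range m,
          g ((R₁ : ℂ) * Complex.exp (2 * (π : ℂ) * Complex.I * (k : ℂ) / (m : ℂ))) := by
  have hwm : g ((R₁ : ℂ) * Complex.exp (2 * (π : ℂ) * Complex.I * ((m : ℕ) : ℂ) / (m : ℂ)))
      = g ((R₁ : ℂ) * Complex.exp (2 * (π : ℂ) * Complex.I * (((0 : ℕ) : ℂ)) / (m : ℂ))) := by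
    congr 2
    rw [show 2 * (π : ℂ) * Complex.I * ((m : ℕ) : ℂ) / (m : ℂ) = 2 * (π : ℂ) * Complex.I by
      rw [mul_div_assoc, div_self (by exact_mod_cast Nat.cast_ne_zero.mpr (by omega) : ((m : ℕ) : ℂ) ≠ 0), mul_one]]
    simp [Complex.exp_two_pi_mul_I]
  have h1 : Finset.Icc 1 m = Finset.Ico 1 (m + 1) := by
    rw [Finset.Ico_add_one_right_eq_Icc]
  rw [h1, Finset.sum_Ico_succ_top (by omega), hwm]
  rw [Finset.range_eq_Ico, Finset.sum_eq_sum_Ico_succ_bot (show 0 < m by omega)]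
  ring

lemma cauchy_formula (R₂ : ℝ) (f : ℂ → ℂ) (U : Set ℂ) (hU : IsOpen U)
    (hUb : Metric.closedBall 0 R₂ ⊆ U) (hf : DifferentiableOn ℂ f U)
    (a : ℂ) (ha : ‖a‖ < R₂) :
    (∮ z in C(0, R₂), f z / (z - a)) = 2 * (π : ℂ) * Complex.I * f a := by
  have hd : DiffContOnCl ℂ f (Metric.ball 0 R₂) :=
    (hf.mono (Metric.closure_ball_subset_closedBall.trans hUb)).diffContOnCl
  have hmem : a ∈ Metric.ball (0 : ℂ) R₂ := by
    rw [Metric.mem_ball, dist_zero_right]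
    simpa using ha
  have h := hd.circleIntegral_sub_inv_smul hmem
  rw [show 2 * (π : ℂ) * Complex.I * f a = (2 * (π : ℂ) * Complex.I) • f a by
    simp [smul_eq_mul], ← h]
  apply circleIntegral.integral_congr ((norm_nonneg a).trans ha.le)
  intro z hz
  simp [div_eq_inv_mul, smul_eq_mul]

end Auxx

/-- **Scalar discrete contour (finite Poisson summation) identity.**
For `0 < R₁ < R₂`, `m ≥ 1`, `w_k = R₁ e^{2πik/m}`, `|lam| < R₁`, and `f` holomorphic on an
open set containing the closed disk of radius `R₂`:
`(1/m) ∑_{k=1}^m w_k f(w_k)/(w_k - lam)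
  = f(lam) - f(lam)·lam^m/(lam^m - R₁^m)
    + (1/(2πi)) ∮_{|z|=R₂} (R₁^m/(z^m - R₁^m)) f(z)/(z - lam) dz`. -/
theorem stmt3 (R₁ R₂ : ℝ) (h1 : 0 < R₁) (h12 : R₁ < R₂) (m : ℕ) (hm : 1 ≤ m)
    (f : ℂ → ℂ) (U : Set ℂ) (hU : IsOpen U) (hUb : Metric.closedBall 0 R₂ ⊆ U)
    (hf : DifferentiableOn ℂ f U) (lam : ℂ) (hlam : ‖lam‖ < R₁) :
    (1 / (m : ℂ)) * ∑ k ∈ Finset.Icc 1 m,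
        ((R₁ : ℂ) * Complex.exp (2 * (π : ℂ) * Complex.I * (k : ℂ) / (m : ℂ))) *
          f ((R₁ : ℂ) * Complex.exp (2 * (π : ℂ) * Complex.I * (k : ℂ) / (m : ℂ))) /
          (((R₁ : ℂ) * Complex.exp (2 * (π : ℂ) * Complex.I * (k : ℂ) / (m : ℂ))) - lam)
      = f lam - f lam * lam ^ m / (lam ^ m - (R₁ : ℂ) ^ m)
        + (1 / (2 * (π : ℂ) * Complex.I)) *
            ∮ z in C(0, R₂), ((R₁ : ℂ) ^ m / (z ^ m - (R₁ : ℂ) ^ m)) * f z / (z - lam) := by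
  have h2 : (0:ℝ) < R₂ := h1.trans h12
  have hm0 : (m : ℂ) ≠ 0 := Nat.cast_ne_zero.mpr (by omega)
  set W : ℕ → ℂ := fun k => (R₁ : ℂ) * Complex.exp (2 * (π : ℂ) * Complex.I * (k : ℂ) / (m : ℂ))
    with hW
  -- |W k| = R₁
  have habsW : ∀ k : ℕ, ‖W k‖ = R₁ := by
    intro k
    have harg : 2 * (π : ℂ) * Complex.I * (k : ℂ) / (m : ℂ)
        = ((2 * π * k / m : ℝ) : ℂ) * Complex.I := by push_cast; ring
    simp only [hW, norm_mul, Complex.norm_real, Real.norm_eq_abs, abs_of_pos h1, harg,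
      Complex.norm_exp_ofReal_mul_I, mul_one]
  have hWlam : ∀ k : ℕ, W k - lam ≠ 0 := by
    intro k h0
    have : ‖W k‖ = ‖lam‖ := by rw [sub_eq_zero] at h0; rw [h0]
    rw [habsW k] at this
    exact absurd (this ▸ hlam) (lt_irrefl _)
  have hWR₂ : ∀ k : ℕ, ‖W k‖ < R₂ := fun k => by rw [habsW]; exact h12
  have hdl : lam ^ m - (R₁ : ℂ) ^ m ≠ 0 := by
    intro h0
    rw [sub_eq_zero] at h0
    have := congrArg (‖·‖) h0
    rw [norm_pow, norm_pow, Complex.norm_real, Real.norm_eq_abs, abs_of_pos h1] at this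
    exact absurd this (ne_of_lt (pow_lt_pow_left₀ hlam (norm_nonneg lam) (by omega)))
  -- nonvanishing of z^m - R₁^m on the sphere
  have hdz : ∀ z : ℂ, z ∈ Metric.sphere (0:ℂ) R₂ → z ^ m - (R₁ : ℂ) ^ m ≠ 0 := by
    intro z hz h0
    rw [sub_eq_zero] at h0
    have hza : ‖z‖ = R₂ := by
      simpa using hz
    have := congrArg (‖·‖) h0
    rw [norm_pow, norm_pow, Complex.norm_real, Real.norm_eq_abs, abs_of_pos h1, hza] at this
    exact absurd this (ne_of_gt (pow_lt_pow_left₀ h12 h1.le (by omega)))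
  have hzW : ∀ z : ℂ, z ∈ Metric.sphere (0:ℂ) R₂ → ∀ k ∈ Finset.range m, z - W k ≠ 0 := by
    intro z hz k hk h0
    have := prod_roots R₁ m hm z
    exact (hdz z hz) (by rw [← this]; exact Finset.prod_eq_zero hk h0)
  have hzlam : ∀ z : ℂ, z ∈ Metric.sphere (0:ℂ) R₂ → z - lam ≠ 0 := by
    intro z hz h0
    have hza : ‖z‖ = R₂ := by simpa using hz
    rw [sub_eq_zero] at h0
    rw [h0] at hza
    exact absurd (hza ▸ (hlam.trans h12)) (lt_irrefl _)
  -- continuity / integrability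
  have hcf : ContinuousOn f (Metric.sphere (0:ℂ) R₂) :=
    hf.continuousOn.mono (Metric.sphere_subset_closedBall.trans hUb)
  have hcont : ∀ a : ℂ, ‖a‖ < R₂ →
      ContinuousOn (fun z => f z / (z - a)) (Metric.sphere (0:ℂ) R₂) := by
    intro a ha
    apply hcf.div ((continuous_id.sub continuous_const).continuousOn)
    intro z hz h0
    have hza : ‖z‖ = R₂ := by simpa using hz
    rw [Pi.sub_apply, sub_eq_zero] at h0
    simp only [id_eq] at h0
    rw [h0] at hza
    exact absurd (hza ▸ ha) (lt_irrefl _)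
  have hci : ∀ a : ℂ, ‖a‖ < R₂ →
      CircleIntegrable (fun z => f z / (z - a)) 0 R₂ :=
    fun a ha => ContinuousOn.circleIntegrable h2.le (hcont a ha)
  -- the integrand rewrite on the sphere
  have hEq : Set.EqOn
      (fun z => ((R₁ : ℂ) ^ m / (z ^ m - (R₁ : ℂ) ^ m)) * f z / (z - lam))
      (fun z => ∑ k ∈ Finset.range m,
        (W k / ((m : ℂ) * (W k - lam))) * (f z / (z - W k) - f z / (z - lam)))
      (Metric.sphere (0:ℂ) R₂) := by
    intro z hz
    have hd := hdz z hz
    have hsum := sum_w_div R₁ m hm z hd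
    simp only
    have hterm : ∀ k ∈ Finset.range m,
        (W k / ((m : ℂ) * (W k - lam))) * (f z / (z - W k) - f z / (z - lam))
          = (f z / (z - lam) / (m : ℂ)) * (W k / (z - W k)) := by
      intro k hk
      have h3 := hzW z hz k hk
      have h4 := hWlam k
      have h5 := hzlam z hz
      field_simp
      ring
    rw [Finset.sum_congr rfl hterm, ← Finset.mul_sum, hsum]
    have hmm : (m : ℂ) * (m : ℂ)⁻¹ = 1 := mul_inv_cancel₀ hm0
    have h5 := hzlam z hz
    rw [div_div, div_mul_div_comm, mul_comm ((z - lam)) ((m:ℂ)), ← div_div]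
    rw [show f z * ((m:ℂ) * (R₁:ℂ) ^ m) = (m:ℂ) * (f z * (R₁:ℂ) ^ m) by ring,
      mul_div_mul_left _ _ hm0]
    ring
  -- rewrite the circle integral
  have hI1 : (∮ z in C(0, R₂), ((R₁ : ℂ) ^ m / (z ^ m - (R₁ : ℂ) ^ m)) * f z / (z - lam))
      = ∑ k ∈ Finset.range m, (W k / ((m : ℂ) * (W k - lam))) *
          (2 * (π : ℂ) * Complex.I * f (W k) - 2 * (π : ℂ) * Complex.I * f lam) := by
    rw [circleIntegral.integral_congr h2.le hEq]
    rw [circleIntegral_finset_sum _ _ _ _ (fun k hk => ?_)]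
    · refine Finset.sum_congr rfl fun k hk => ?_
      rw [circleIntegral.integral_const_mul]
      congr 1
      rw [circleIntegral.integral_sub (hci (W k) (hWR₂ k)) (hci lam (hlam.trans h12))]
      rw [cauchy_formula R₂ f U hU hUb hf (W k) (hWR₂ k),
        cauchy_formula R₂ f U hU hUb hf lam (hlam.trans h12)]
    · apply ContinuousOn.circleIntegrable h2.le
      exact continuousOn_const.mul ((hcont (W k) (hWR₂ k)).sub (hcont lam (hlam.trans h12)))
  -- replace the Icc sum by a range sum
  have hIcc : (∑ k ∈ Finset.Icc 1 m, W k * f (W k) / (W k - lam))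
      = ∑ k ∈ Finset.range m, W k * f (W k) / (W k - lam) :=
    sum_Icc_eq_sum_range R₁ m hm (fun x => x * f x / (x - lam))
  rw [hIcc, hI1]
  -- sum of W k / (W k - lam)
  have hS2 : (∑ k ∈ Finset.range m, W k / (W k - lam))
      = -((m : ℂ) * (R₁ : ℂ) ^ m / (lam ^ m - (R₁ : ℂ) ^ m)) := by
    rw [← sum_w_div R₁ m hm lam hdl, ← Finset.sum_neg_distrib]
    refine Finset.sum_congr rfl fun k hk => ?_
    rw [show lam - W k = -(W k - lam) by ring, div_neg, neg_neg]
  -- final algebra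
  have hre : ∀ k ∈ Finset.range m,
      (W k / ((m : ℂ) * (W k - lam))) *
          (2 * (π : ℂ) * Complex.I * f (W k) - 2 * (π : ℂ) * Complex.I * f lam)
        = 2 * (π : ℂ) * Complex.I *
            ((1 / (m : ℂ)) * (W k * f (W k) / (W k - lam))
              - (f lam / (m : ℂ)) * (W k / (W k - lam))) := by
    intro k hk
    have h4 := hWlam k
    field_simp
  rw [Finset.sum_congr rfl hre, ← Finset.mul_sum, Finset.sum_sub_distrib,
    ← Finset.mul_sum, ← Finset.mul_sum, hS2]
  have h2pi := Complex.two_pi_I_ne_zero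
  field_simp
  ring
end

section
/- Let 0 < R₁ < R₂, let m ≥ 1 be an integer, and set μ = R₁/R₂ (so 0 < μ < 1). Let A be an n×n complex matrix that is diagonalizable as A = S D S^{-1} with all eigenvalues of modulus at most R₁, and let κ_S = ‖S‖‖S^{-1}‖. Let f be continuous on the circle |z| = R₂ with |f(z)| ≤ B₂ there. Then ‖ (1/(2πi)) · ∮_{|z|=R₂} ( R₁^m / (z^m - R₁^m) ) · f(z) · (z I - A)^{-1} dz ‖ ≤ R₂ · B₂ · κ_S · μ^m / ( (1 - μ^m)(R₂ - R₁) ). -/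
open Complex Matrix
open scoped Real Matrix.Norms.L2Operator

lemma diag_opNorm_le {n : ℕ} (v : Fin n → ℂ) (C : ℝ) (hC : 0 ≤ C) (h : ∀ i, ‖v i‖ ≤ C) :
    ‖Matrix.diagonal v‖ ≤ C := by
  rw [Matrix.l2_opNorm_def]
  refine ContinuousLinearMap.opNorm_le_bound _ hC fun x => ?_
  have hx : ((LinearEquiv.trans Matrix.toEuclideanLin
      LinearMap.toContinuousLinearMap) (Matrix.diagonal v)) x
      = WithLp.toLp 2 (Matrix.diagonal v *ᵥ WithLp.ofLp x) :=
    rfl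
  rw [hx]
  rw [EuclideanSpace.norm_eq]
  have hx2 : ‖x‖ = Real.sqrt (∑ i, ‖x i‖ ^ 2) := EuclideanSpace.norm_eq x
  rw [hx2, ← Real.sqrt_sq hC, ← Real.sqrt_mul (sq_nonneg C)]
  apply Real.sqrt_le_sqrt
  rw [Finset.mul_sum]
  apply Finset.sum_le_sum
  intro i _
  have : WithLp.toLp 2 (Matrix.diagonal v *ᵥ WithLp.ofLp x) i
      = v i * x i := by
    simp [Matrix.mulVec_diagonal]
  rw [this, norm_mul, mul_pow]
  exact mul_le_mul_of_nonneg_right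
    (pow_le_pow_left₀ (norm_nonneg _) (h i) 2) (sq_nonneg _)

/-- **Bound on the analytic truncation integral (ML inequality).**
For `0 < R₁ < R₂`, `μ = R₁/R₂`, `A = S D S⁻¹` diagonalizable with eigenvalues of modulus
at most `R₁`, `κ_S = ‖S‖‖S⁻¹‖`, and `f` continuous on `|z| = R₂` with `|f| ≤ B₂` there:
`‖(1/(2πi)) ∮_{|z|=R₂} (R₁^m/(z^m - R₁^m)) f(z) (zI-A)⁻¹ dz‖
  ≤ R₂ B₂ κ_S μ^m / ((1 - μ^m)(R₂ - R₁))`. -/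
theorem stmt7 {n : ℕ} (R₁ R₂ : ℝ) (h1 : 0 < R₁) (h12 : R₁ < R₂) (m : ℕ) (hm : 1 ≤ m)
    (A S : Matrix (Fin n) (Fin n) ℂ) (d : Fin n → ℂ) (hS : IsUnit S)
    (hA : A = S * Matrix.diagonal d * S⁻¹) (hd : ∀ i, ‖d i‖ ≤ R₁)
    (f : ℂ → ℂ) (hf : ContinuousOn f (Metric.sphere 0 R₂)) (B₂ : ℝ)
    (hB : ∀ z ∈ Metric.sphere (0 : ℂ) R₂, ‖f z‖ ≤ B₂) :
    ‖(1 / (2 * (π : ℂ) * Complex.I)) •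
        ∮ z in C(0, R₂),
          (((R₁ : ℂ) ^ m / (z ^ m - (R₁ : ℂ) ^ m)) * f z) •
            ((z • (1 : Matrix (Fin n) (Fin n) ℂ) - A)⁻¹)‖
      ≤ R₂ * B₂ * (‖S‖ * ‖S⁻¹‖) * (R₁ / R₂) ^ m / ((1 - (R₁ / R₂) ^ m) * (R₂ - R₁)) := by
  have h2 : (0:ℝ) < R₂ := h1.trans h12
  have hRR : (0:ℝ) < R₂ - R₁ := by linarith
  have hpow : R₁ ^ m < R₂ ^ m := pow_lt_pow_left₀ h12 h1.le (by omega)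
  have hpow1 : (0:ℝ) < R₁ ^ m := pow_pos h1 m
  have hB0 : 0 ≤ B₂ := le_trans (norm_nonneg _)
    (hB R₂ (by simp [abs_of_pos h2]))
  have hSdet : IsUnit S.det := (Matrix.isUnit_iff_isUnit_det S).mp hS
  -- the pointwise bound constant
  set C₀ : ℝ := R₁ ^ m / (R₂ ^ m - R₁ ^ m) * B₂ * (‖S‖ * ‖S⁻¹‖ / (R₂ - R₁)) with hC₀
  have hC₀0 : 0 ≤ C₀ :=
    mul_nonneg (mul_nonneg (div_nonneg hpow1.le (by linarith)) hB0)
      (div_nonneg (mul_nonneg (norm_nonneg _) (norm_nonneg _)) hRR.le)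
  have key : ∀ z ∈ Metric.sphere (0:ℂ) R₂,
      ‖(((R₁ : ℂ) ^ m / (z ^ m - (R₁ : ℂ) ^ m)) * f z) •
        ((z • (1 : Matrix (Fin n) (Fin n) ℂ) - A)⁻¹)‖ ≤ C₀ := by
    intro z hz
    have hzabs : ‖z‖ = R₂ := by
      simpa [Complex.dist_eq] using hz
    -- resolvent factorization
    have hne : ∀ i, z - d i ≠ 0 := by
      intro i
      have : ‖d i‖ < ‖z‖ := by rw [hzabs]; exact (hd i).trans_lt h12
      intro hcon
      rw [sub_eq_zero] at hcon
      rw [hcon] at this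
      exact lt_irrefl _ this
    have hdiag : z • (1 : Matrix (Fin n) (Fin n) ℂ) - A
        = S * Matrix.diagonal (fun i => z - d i) * S⁻¹ := by
      have hdz : Matrix.diagonal (fun _ : Fin n => z) = z • (1 : Matrix (Fin n) (Fin n) ℂ) :=
        (Matrix.smul_one_eq_diagonal z).symm
      have h1' : S * Matrix.diagonal (fun _ : Fin n => z) * S⁻¹
          = z • (1 : Matrix (Fin n) (Fin n) ℂ) := by
        rw [hdz, Matrix.mul_smul, Matrix.smul_mul, Matrix.mul_one,
          Matrix.mul_nonsing_inv S hSdet]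
      rw [hA, ← h1', ← Matrix.sub_mul, ← Matrix.mul_sub, Matrix.diagonal_sub]
    have hdinv : (Matrix.diagonal (fun i => z - d i))⁻¹
        = Matrix.diagonal (fun i => (z - d i)⁻¹) := by
      apply Matrix.inv_eq_right_inv
      rw [Matrix.diagonal_mul_diagonal,
        show (fun i => (z - d i) * (z - d i)⁻¹) = fun _ : Fin n => (1:ℂ) from
          funext fun i => mul_inv_cancel₀ (hne i)]
      exact Matrix.diagonal_one
    have hinv : (z • (1 : Matrix (Fin n) (Fin n) ℂ) - A)⁻¹
        = S * Matrix.diagonal (fun i => (z - d i)⁻¹) * S⁻¹ := by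
      rw [hdiag, Matrix.mul_inv_rev, Matrix.mul_inv_rev, Matrix.nonsing_inv_nonsing_inv S hSdet,
        hdinv, mul_assoc]
    -- norm of resolvent
    have hres : ‖(z • (1 : Matrix (Fin n) (Fin n) ℂ) - A)⁻¹‖
        ≤ ‖S‖ * ‖S⁻¹‖ / (R₂ - R₁) := by
      rw [hinv]
      have hd' : ‖Matrix.diagonal (fun i => (z - d i)⁻¹)‖ ≤ (R₂ - R₁)⁻¹ := by
        apply diag_opNorm_le _ _ (by positivity)
        intro i
        rw [norm_inv]
        rw [inv_le_inv₀ _ hRR]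
        · calc R₂ - R₁ ≤ ‖z‖ - ‖d i‖ := by
                rw [hzabs]
                linarith [hd i]
            _ ≤ ‖z - d i‖ := norm_sub_norm_le _ _
        · simpa using (hne i)
      calc ‖S * Matrix.diagonal (fun i => (z - d i)⁻¹) * S⁻¹‖
          ≤ ‖S * Matrix.diagonal (fun i => (z - d i)⁻¹)‖ * ‖S⁻¹‖ := Matrix.l2_opNorm_mul _ _
        _ ≤ ‖S‖ * ‖Matrix.diagonal (fun i => (z - d i)⁻¹)‖ * ‖S⁻¹‖ := by
            gcongr; exact Matrix.l2_opNorm_mul _ _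
        _ ≤ ‖S‖ * (R₂ - R₁)⁻¹ * ‖S⁻¹‖ := by gcongr
        _ = ‖S‖ * ‖S⁻¹‖ / (R₂ - R₁) := by ring
    -- scalar bound
    have hscal : ‖(R₁ : ℂ) ^ m / (z ^ m - (R₁ : ℂ) ^ m)‖
        ≤ R₁ ^ m / (R₂ ^ m - R₁ ^ m) := by
      rw [norm_div]
      have hden : R₂ ^ m - R₁ ^ m ≤ ‖z ^ m - (R₁:ℂ) ^ m‖ := by
        calc R₂ ^ m - R₁ ^ m
            = ‖z ^ m‖ - ‖((R₁:ℂ) ^ m)‖ := by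
              rw [norm_pow, norm_pow, hzabs]
              simp [abs_of_pos h1]
          _ ≤ ‖z ^ m - (R₁:ℂ) ^ m‖ := norm_sub_norm_le _ _
          _ = ‖z ^ m - (R₁:ℂ) ^ m‖ := rfl
      have hnum : ‖(R₁:ℂ) ^ m‖ = R₁ ^ m := by
        rw [norm_pow]; simp [abs_of_pos h1]
      rw [hnum]
      apply div_le_div_of_nonneg_left hpow1.le (by linarith) hden
    calc ‖(((R₁ : ℂ) ^ m / (z ^ m - (R₁ : ℂ) ^ m)) * f z) •
          ((z • (1 : Matrix (Fin n) (Fin n) ℂ) - A)⁻¹)‖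
        = ‖(R₁ : ℂ) ^ m / (z ^ m - (R₁ : ℂ) ^ m)‖ * ‖f z‖ *
          ‖(z • (1 : Matrix (Fin n) (Fin n) ℂ) - A)⁻¹‖ := by
          rw [norm_smul, norm_mul]
      _ ≤ (R₁ ^ m / (R₂ ^ m - R₁ ^ m)) * B₂ * (‖S‖ * ‖S⁻¹‖ / (R₂ - R₁)) :=
          mul_le_mul
            (mul_le_mul hscal (hB z hz) (norm_nonneg _)
              (div_nonneg hpow1.le (by linarith)))
            hres (norm_nonneg _)
            (mul_nonneg (div_nonneg hpow1.le (by linarith)) hB0)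
      _ = C₀ := rfl
  -- integral bound
  have hint : ‖∮ z in C(0, R₂),
      (((R₁ : ℂ) ^ m / (z ^ m - (R₁ : ℂ) ^ m)) * f z) •
        ((z • (1 : Matrix (Fin n) (Fin n) ℂ) - A)⁻¹)‖ ≤ 2 * π * R₂ * C₀ :=
    circleIntegral.norm_integral_le_of_norm_le_const h2.le key
  rw [norm_smul]
  have hcoef : ‖(1 / (2 * (π : ℂ) * Complex.I))‖ = 1 / (2 * π) := by
    simp [abs_of_pos Real.pi_pos]
  rw [hcoef]
  have hπ : (0:ℝ) < 2 * π := by positivity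
  calc (1 / (2 * π)) * ‖∮ z in C(0, R₂),
        (((R₁ : ℂ) ^ m / (z ^ m - (R₁ : ℂ) ^ m)) * f z) •
          ((z • (1 : Matrix (Fin n) (Fin n) ℂ) - A)⁻¹)‖
      ≤ (1 / (2 * π)) * (2 * π * R₂ * C₀) := by
        gcongr
    _ = R₂ * C₀ := by
        field_simp
    _ = R₂ * B₂ * (‖S‖ * ‖S⁻¹‖) * (R₁ / R₂) ^ m / ((1 - (R₁ / R₂) ^ m) * (R₂ - R₁)) := by
        rw [hC₀, div_pow]
        have hR2m : (0:ℝ) < R₂ ^ m := pow_pos h2 m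
        have h1μ : 1 - R₁ ^ m / R₂ ^ m = (R₂ ^ m - R₁ ^ m) / R₂ ^ m := by
          field_simp
        rw [h1μ]
        field_simp
end

section
/- Let T > 0, D > 0, and α ≥ 1/2 be real numbers. Then the series Σ_{n=1}^{∞} e^{-T (n D)^{2α}} converges and satisfies Σ_{n=1}^{∞} e^{-T (n D)^{2α}} ≤ e^{-T D^{2α}} · ( 1 + 1 / (2α T D^{2α}) ). -/
/-- **Aliasing-error series bound.**
For `T > 0`, `D > 0`, `α ≥ 1/2`, the series `∑_{n=1}^∞ e^{-T(nD)^{2α}}` converges and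
`∑_{n=1}^∞ e^{-T(nD)^{2α}} ≤ e^{-TD^{2α}} (1 + 1/(2αTD^{2α}))`. -/
theorem stmt11 (T D α : ℝ) (hT : 0 < T) (hD : 0 < D) (hα : 1 / 2 ≤ α) :
    Summable (fun k : ℕ => Real.exp (-(T * (((k : ℝ) + 1) * D) ^ (2 * α)))) ∧
    ∑' k : ℕ, Real.exp (-(T * (((k : ℝ) + 1) * D) ^ (2 * α)))
      ≤ Real.exp (-(T * D ^ (2 * α))) * (1 + 1 / (2 * α * T * D ^ (2 * α))) := by
  set b : ℝ := 2 * α with hb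
  have hb1 : 1 ≤ b := by rw [hb]; linarith
  have hb0 : 0 < b := lt_of_lt_of_le one_pos hb1
  set c : ℝ := T * D ^ b with hc
  have hc0 : 0 < c := mul_pos hT (Real.rpow_pos_of_pos hD b)
  set x : ℝ := b * c with hx
  have hx0 : 0 < x := mul_pos hb0 hc0
  set r : ℝ := Real.exp (-x) with hr
  have hr0 : 0 ≤ r := (Real.exp_pos _).le
  have hr1 : r < 1 := Real.exp_lt_one_iff.mpr (by linarith)
  -- rewrite the terms
  have hterm : ∀ k : ℕ, Real.exp (-(T * (((k : ℝ) + 1) * D) ^ (2 * α)))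
      = Real.exp (-(c * ((k : ℝ) + 1) ^ b)) := by
    intro k
    have hk0 : (0:ℝ) ≤ (k : ℝ) + 1 := by positivity
    rw [Real.mul_rpow hk0 hD.le]
    ring_nf
    rw [hc, hb]; ring_nf
  -- per-term bound by geometric
  have hbound : ∀ k : ℕ, Real.exp (-(c * ((k : ℝ) + 1) ^ b))
      ≤ Real.exp (-c) * r ^ k := by
    intro k
    rw [hr, ← Real.exp_nat_mul, ← Real.exp_add]
    apply Real.exp_le_exp.mpr
    have hbern : 1 + b * (k : ℝ) ≤ (1 + (k : ℝ)) ^ b :=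
      one_add_mul_self_le_rpow_one_add (le_trans (by norm_num) (Nat.cast_nonneg k)) hb1
    have : c * (1 + b * (k : ℝ)) ≤ c * ((k : ℝ) + 1) ^ b := by
      have := mul_le_mul_of_nonneg_left hbern hc0.le
      rwa [add_comm 1 (k:ℝ)] at this
    nlinarith [this]
  have hgeo : Summable (fun k : ℕ => Real.exp (-c) * r ^ k) :=
    (summable_geometric_of_lt_one hr0 hr1).mul_left _
  have hsum : Summable (fun k : ℕ => Real.exp (-(c * ((k : ℝ) + 1) ^ b))) :=
    Summable.of_nonneg_of_le (fun k => (Real.exp_pos _).le) hbound hgeo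
  have hsum' : Summable (fun k : ℕ => Real.exp (-(T * (((k : ℝ) + 1) * D) ^ (2 * α)))) := by
    simpa only [hterm] using hsum
  refine ⟨hsum', ?_⟩
  have h1 : ∑' k : ℕ, Real.exp (-(T * (((k : ℝ) + 1) * D) ^ (2 * α)))
      = ∑' k : ℕ, Real.exp (-(c * ((k : ℝ) + 1) ^ b)) := by
    exact tsum_congr hterm
  rw [h1]
  have h2 : ∑' k : ℕ, Real.exp (-(c * ((k : ℝ) + 1) ^ b))
      ≤ ∑' k : ℕ, Real.exp (-c) * r ^ k := Summable.tsum_le_tsum hbound hsum hgeo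
  have h3 : ∑' k : ℕ, Real.exp (-c) * r ^ k = Real.exp (-c) * (1 - r)⁻¹ := by
    rw [tsum_mul_left, tsum_geometric_of_lt_one hr0 hr1]
  -- (1 - r)⁻¹ ≤ 1 + 1/x
  have hxr : x + 1 ≤ Real.exp x := by
    have := Real.add_one_le_exp x; linarith
  have hrle : r ≤ 1 / (x + 1) := by
    rw [hr, Real.exp_neg, le_div_iff₀ (by linarith)]
    rw [inv_mul_le_iff₀ (Real.exp_pos x)]
    simpa using hxr
  have h1r : x / (x + 1) ≤ 1 - r := by
    have : 1 - 1 / (x + 1) = x / (x + 1) := by field_simp; ring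
    linarith [hrle, this.ge]
  have h4 : (1 - r)⁻¹ ≤ 1 + 1 / x := by
    have hpos : 0 < x / (x + 1) := by positivity
    have := inv_anti₀ hpos h1r
    calc (1 - r)⁻¹ ≤ (x / (x + 1))⁻¹ := this
      _ = (x + 1) / x := by rw [inv_div]
      _ = 1 + 1 / x := by field_simp
  have hfinal : Real.exp (-c) * (1 - r)⁻¹ ≤ Real.exp (-c) * (1 + 1 / x) :=
    mul_le_mul_of_nonneg_left h4 (Real.exp_pos _).le
  have hrw : 2 * α * T * D ^ (2 * α) = x := by rw [hx, hc, hb]; ring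
  calc ∑' k : ℕ, Real.exp (-(c * ((k : ℝ) + 1) ^ b))
      ≤ Real.exp (-c) * (1 - r)⁻¹ := by rw [← h3]; exact h2
    _ ≤ Real.exp (-c) * (1 + 1 / x) := hfinal
    _ = Real.exp (-(T * D ^ (2 * α))) * (1 + 1 / (2 * α * T * D ^ (2 * α))) := by
        rw [hrw, hc, hb]
end

section
/- There exists an absolute constant C > 0 such that for every real τ ≥ 1 and every ε ∈ (0, 1/2), there exists a real polynomial p of degree at most C · (τ + log(1/ε)) satisfying |p(x)| ≤ 1 for all x ∈ [-1, 1] and |p(x) - cos(τ x)| ≤ ε for all x ∈ [-1, 1]. -/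
open Real Polynomial Finset

private lemma aux_decay (τ : ℝ) (hτ : 1 ≤ τ) (N : ℕ) (hN : τ ≤ N) (j : ℕ) :
    τ ^ (2*(N+j)) / ((2*(N+j)).factorial : ℝ) ≤ τ ^ (2*N) / ((2*N).factorial : ℝ) * (1/4)^j := by
  induction j with
  | zero => simp
  | succ j ih =>
    set k := N + j with hk
    have hτ0 : (0:ℝ) < τ := by linarith
    have hkk : τ ≤ (k:ℝ) := le_trans hN (by exact_mod_cast Nat.le_add_right N j)
    have h4 : 4 * τ^2 ≤ ((2*k+1 : ℕ):ℝ) * ((2*k+2 : ℕ):ℝ) := by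
      push_cast; nlinarith
    have hf : ((2*k+2).factorial : ℝ) = ((2*k+2 : ℕ):ℝ) * (((2*k+1 : ℕ):ℝ) * ((2*k).factorial : ℝ)) := by
      rw [show 2*k+2 = (2*k+1)+1 by ring, Nat.factorial_succ, Nat.factorial_succ]
      push_cast; ring
    have step : τ ^ (2*(k+1)) / ((2*(k+1)).factorial : ℝ) ≤ (1/4) * (τ ^ (2*k) / ((2*k).factorial : ℝ)) := by
      rw [show 2*(k+1) = 2*k+2 by ring, pow_add, hf,
        show (1/4 : ℝ) * (τ ^ (2*k) / ((2*k).factorial : ℝ)) = τ ^ (2*k) / (4 * ((2*k).factorial:ℝ)) by ring,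
        div_le_div_iff₀ (by positivity) (by positivity)]
      have h1 : (0:ℝ) ≤ τ ^ (2*k) := by positivity
      have h2 : (0:ℝ) < ((2*k).factorial : ℝ) := by positivity
      nlinarith [mul_nonneg (mul_nonneg h1 h2.le) (sub_nonneg.2 h4)]
    calc τ ^ (2*(N+(j+1))) / ((2*(N+(j+1))).factorial : ℝ)
        = τ ^ (2*(k+1)) / ((2*(k+1)).factorial : ℝ) := by rw [show N+(j+1) = k+1 from by omega]
      _ ≤ (1/4) * (τ ^ (2*k) / ((2*k).factorial : ℝ)) := step
      _ ≤ (1/4) * (τ ^ (2*N) / ((2*N).factorial : ℝ) * (1/4)^j) := by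
          have : (0:ℝ) ≤ 1/4 := by norm_num
          exact mul_le_mul_of_nonneg_left ih this
      _ = τ ^ (2*N) / ((2*N).factorial : ℝ) * (1/4)^(j+1) := by ring

private lemma aux_term_le (τ : ℝ) (hτ : 0 ≤ τ) (N : ℕ) :
    τ^(2*N)/((2*N).factorial : ℝ) ≤ Real.exp τ := by
  calc τ^(2*N)/((2*N).factorial : ℝ) ≤ ∑ i ∈ Finset.range (2*N+1), τ^i/(i.factorial : ℝ) := by
        exact Finset.single_le_sum (f := fun i => τ^i/(i.factorial : ℝ))
          (fun i _ => by positivity) (Finset.self_mem_range_succ _)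
    _ ≤ Real.exp τ := Real.sum_le_exp_of_nonneg hτ _

/-- **Polynomial approximation of the cosine (Jacobi–Anger / QSVT degree bound).**
There is an absolute constant `C > 0` such that for every `τ ≥ 1` and `ε ∈ (0, 1/2)` there
exists a real polynomial `p` of degree at most `C(τ + log(1/ε))` with `|p(x)| ≤ 1` on `[-1,1]`
and `|p(x) - cos(τx)| ≤ ε` on `[-1,1]`. -/
theorem stmt17 :
    ∃ C : ℝ, 0 < C ∧ ∀ τ : ℝ, 1 ≤ τ → ∀ ε : ℝ, ε ∈ Set.Ioo (0 : ℝ) (1 / 2) →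
      ∃ p : Polynomial ℝ,
        (p.natDegree : ℝ) ≤ C * (τ + Real.log (1 / ε)) ∧
        (∀ x ∈ Set.Icc (-1 : ℝ) 1, |p.eval x| ≤ 1) ∧
        (∀ x ∈ Set.Icc (-1 : ℝ) 1, |p.eval x - Real.cos (τ * x)| ≤ ε) := by
  refine ⟨12, by norm_num, ?_⟩
  intro τ hτ ε hε
  obtain ⟨hε0, hε2⟩ := hε
  set L := Real.log (1/ε) with hLdef
  have hτ0 : (0:ℝ) < τ := by linarith
  have hL : 0 < L := Real.log_pos (by rw [lt_div_iff₀ hε0]; linarith)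
  set N₀ := ⌈τ⌉₊ with hN₀
  set m := ⌈τ + L⌉₊ + 2 with hm
  set n := N₀ + m with hn
  set g : ℕ → ℝ := fun k => τ^(2*k)/((2*k).factorial : ℝ) with hg
  have hgsum : Summable g := by
    have h := Real.summable_pow_div_factorial τ
    exact h.comp_injective (fun a b hab => by dsimp at hab; omega : Function.Injective (fun k : ℕ => 2*k))
  have hτN : τ ≤ (N₀ : ℝ) := Nat.le_ceil τ
  -- tail bound
  have hexpε : Real.exp (-L) = ε := by
    rw [hLdef, Real.log_div one_ne_zero (ne_of_gt hε0), Real.log_one]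
    simp [Real.exp_log hε0]
  have hmge : τ + L + 2 ≤ (m:ℝ) := by
    have := Nat.le_ceil (τ + L)
    push_cast [hm]; linarith
  have htail : ∑' j, g (j + n) ≤ ε/4 := by
    have hdecay : ∀ j, g (j + n) ≤ (g N₀ * (1/4)^m) * (1/4)^j := by
      intro j
      have h1 : j + n = N₀ + (m + j) := by omega
      have := aux_decay τ hτ N₀ hτN (m + j)
      rw [h1]
      calc g (N₀ + (m+j)) ≤ g N₀ * (1/4)^(m+j) := this
        _ = (g N₀ * (1/4)^m) * (1/4)^j := by rw [pow_add]; ring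
    have hsum1 : Summable (fun j => g (j + n)) := (summable_nat_add_iff n).2 hgsum
    have hsum2 : Summable (fun j : ℕ => (g N₀ * (1/4)^m) * (1/4:ℝ)^j) :=
      (summable_geometric_of_lt_one (by norm_num) (by norm_num)).mul_left _
    have h2 : ∑' j, g (j + n) ≤ (g N₀ * (1/4)^m) * (4/3) := by
      calc ∑' j, g (j + n) ≤ ∑' j : ℕ, (g N₀ * (1/4)^m) * (1/4:ℝ)^j :=
            Summable.tsum_le_tsum hdecay hsum1 hsum2
        _ = (g N₀ * (1/4)^m) * (4/3) := by
            rw [tsum_mul_left, tsum_geometric_of_lt_one (by norm_num) (by norm_num)]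
            norm_num
    have hgN : g N₀ ≤ Real.exp τ := aux_term_le τ hτ0.le N₀
    have hq : ((1:ℝ)/4)^m ≤ Real.exp (-(m:ℝ)) := by
      have h14 : (1/4 : ℝ) ≤ Real.exp (-1) := by
        rw [Real.exp_neg]
        rw [le_inv_comm₀ (by norm_num) (Real.exp_pos 1)]
        nlinarith [Real.exp_one_lt_d9]
      calc ((1:ℝ)/4)^m ≤ (Real.exp (-1))^m := pow_le_pow_left₀ (by norm_num) h14 m
        _ = Real.exp (-(m:ℝ)) := by rw [← Real.exp_nat_mul]; ring_nf
    have hq2 : Real.exp (-(m:ℝ)) ≤ Real.exp (-(τ + L + 2)) := by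
      apply Real.exp_le_exp.2; linarith
    have hgN0 : 0 ≤ g N₀ := by positivity
    have key : g N₀ * (1/4)^m ≤ ε * Real.exp (-2) := by
      calc g N₀ * (1/4)^m ≤ Real.exp τ * Real.exp (-(τ + L + 2)) := by
            apply mul_le_mul hgN (le_trans hq hq2) (by positivity) (Real.exp_pos τ).le
        _ = Real.exp (-L) * Real.exp (-2) := by
            rw [← Real.exp_add, ← Real.exp_add]; ring_nf
        _ = ε * Real.exp (-2) := by rw [hexpε]
    have hexp2 : Real.exp (-2 : ℝ) * (4/3) ≤ 1/4 := by
      have h2 : (16:ℝ)/3 ≤ Real.exp 2 := by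
        have h := Real.exp_one_gt_d9
        have he : Real.exp 2 = Real.exp 1 * Real.exp 1 := by rw [← Real.exp_add]; norm_num
        nlinarith
      have hmul : Real.exp (-2:ℝ) * Real.exp 2 = 1 := by rw [← Real.exp_add]; norm_num
      have hp := (Real.exp_pos (-2:ℝ)).le
      nlinarith [mul_le_mul_of_nonneg_left h2 hp]
    calc ∑' j, g (j + n) ≤ (g N₀ * (1/4)^m) * (4/3) := h2
      _ ≤ (ε * Real.exp (-2)) * (4/3) := by
          apply mul_le_mul_of_nonneg_right key (by norm_num)
      _ = ε * (Real.exp (-2) * (4/3)) := by ring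
      _ ≤ ε * (1/4) := mul_le_mul_of_nonneg_left hexp2 hε0.le
      _ = ε/4 := by ring
  -- the truncated polynomial
  set p₀ : Polynomial ℝ :=
    ∑ k ∈ Finset.range n, Polynomial.C ((-1)^k * τ^(2*k) / ((2*k).factorial : ℝ)) * X^(2*k) with hp₀
  have heval : ∀ x : ℝ, p₀.eval x = ∑ k ∈ Finset.range n, (-1)^k * (τ*x)^(2*k) / ((2*k).factorial : ℝ) := by
    intro x
    rw [hp₀, Polynomial.eval_finset_sum]
    apply Finset.sum_congr rfl
    intro k _
    rw [Polynomial.eval_mul, Polynomial.eval_C, Polynomial.eval_pow, Polynomial.eval_X, mul_pow]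
    ring
  have hdeg : p₀.natDegree ≤ 2*n := by
    apply Polynomial.natDegree_sum_le_of_forall_le
    intro k hk
    apply le_trans (Polynomial.natDegree_C_mul_le _ _)
    rw [Polynomial.natDegree_X_pow]
    exact Nat.mul_le_mul_left 2 (Finset.mem_range.1 hk).le
  -- error bound for p₀
  have herr : ∀ x ∈ Set.Icc (-1:ℝ) 1, |p₀.eval x - Real.cos (τ*x)| ≤ ε/4 := by
    intro x hx
    have hx1 : |x| ≤ 1 := abs_le.2 ⟨hx.1, hx.2⟩
    set f : ℕ → ℝ := fun k => (-1)^k * (τ*x)^(2*k) / ((2*k).factorial : ℝ) with hfd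
    have hfs : HasSum f (Real.cos (τ*x)) := Real.hasSum_cos (τ*x)
    have hsplit : ∑ k ∈ Finset.range n, f k + ∑' i, f (i + n) = Real.cos (τ*x) := by
      rw [Summable.sum_add_tsum_nat_add n hfs.summable, hfs.tsum_eq]
    have habs : ∀ k, |f k| ≤ g k := by
      intro k
      have h1 : |f k| = |τ*x|^(2*k) / ((2*k).factorial : ℝ) := by
        rw [hfd]
        rw [abs_div, abs_mul, abs_pow, abs_pow, abs_neg, abs_one, one_pow, one_mul,
          Nat.abs_cast]
      rw [h1, hg]
      apply div_le_div_of_nonneg_right ?_ (by positivity)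
      · apply pow_le_pow_left₀ (abs_nonneg _)
        rw [abs_mul, abs_of_pos hτ0]
        calc τ * |x| ≤ τ * 1 := mul_le_mul_of_nonneg_left hx1 hτ0.le
          _ = τ := mul_one τ
    have hfsum : Summable (fun i => f (i + n)) := (summable_nat_add_iff n).2 hfs.summable
    have hgsum' : Summable (fun i => g (i + n)) := (summable_nat_add_iff n).2 hgsum
    have h3 : |∑' i, f (i + n)| ≤ ∑' i, g (i + n) := by
      calc |∑' i, f (i + n)| ≤ ∑' i, |f (i + n)| := by
            have := norm_tsum_le_tsum_norm (f := fun i => f (i + n)) (by simpa using hfsum.abs)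
            simpa using this
        _ ≤ ∑' i, g (i + n) := Summable.tsum_le_tsum (fun i => habs (i+n)) hfsum.abs hgsum'
    have : p₀.eval x - Real.cos (τ*x) = -∑' i, f (i + n) := by
      rw [heval x, ← hsplit]; simp only [hfd]; ring
    rw [this, abs_neg]
    exact le_trans h3 htail
  -- p₀ is bounded by 1 + ε/4
  have hbd : ∀ x ∈ Set.Icc (-1:ℝ) 1, |p₀.eval x| ≤ 1 + ε/4 := by
    intro x hx
    calc |p₀.eval x| ≤ |p₀.eval x - Real.cos (τ*x)| + |Real.cos (τ*x)| := by
          have := abs_add_le (p₀.eval x - Real.cos (τ*x)) (Real.cos (τ*x))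
          simpa using this
      _ ≤ ε/4 + 1 := add_le_add (herr x hx) (Real.abs_cos_le_one _)
      _ = 1 + ε/4 := by ring
  -- final polynomial
  set s : ℝ := 1/(1 + ε/4) with hs
  have hs0 : 0 < s := by positivity
  have hs1 : s ≤ 1 := by
    rw [hs]; rw [div_le_one (by linarith)]; linarith
  refine ⟨Polynomial.C s * p₀, ?_, ?_, ?_⟩
  · -- degree bound
    have h1 : ((Polynomial.C s * p₀).natDegree : ℝ) ≤ (2*n : ℕ) := by
      exact_mod_cast le_trans (Polynomial.natDegree_C_mul_le _ _) hdeg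
    apply le_trans h1
    have hN₀le : (N₀ : ℝ) ≤ τ + 1 := le_of_lt (Nat.ceil_lt_add_one hτ0.le)
    have hmle : (m : ℝ) ≤ τ + L + 3 := by
      have := Nat.ceil_lt_add_one (by positivity : (0:ℝ) ≤ τ + L)
      push_cast [hm]; linarith
    have hnle : (n : ℝ) ≤ 2*τ + L + 4 := by
      rw [hn, Nat.cast_add]; linarith
    push_cast
    linarith
  · intro x hx
    rw [Polynomial.eval_mul, Polynomial.eval_C, abs_mul, abs_of_pos hs0]
    calc s * |p₀.eval x| ≤ s * (1 + ε/4) := mul_le_mul_of_nonneg_left (hbd x hx) hs0.le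
      _ = 1 := by rw [hs]; field_simp
  · intro x hx
    rw [Polynomial.eval_mul, Polynomial.eval_C]
    have h1 : |s * p₀.eval x - p₀.eval x| ≤ ε/4 := by
      have : s * p₀.eval x - p₀.eval x = -((1-s) * p₀.eval x) := by ring
      rw [this, abs_neg, abs_mul, abs_of_nonneg (by linarith : (0:ℝ) ≤ 1 - s)]
      calc (1-s) * |p₀.eval x| ≤ (1-s) * (1 + ε/4) :=
            mul_le_mul_of_nonneg_left (hbd x hx) (by linarith)
        _ = ε/4 := by rw [hs]; field_simp; ring
    calc |s * p₀.eval x - Real.cos (τ*x)|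
        ≤ |s * p₀.eval x - p₀.eval x| + |p₀.eval x - Real.cos (τ*x)| := by
          have := abs_sub_le (s * p₀.eval x) (p₀.eval x) (Real.cos (τ*x))
          exact this
      _ ≤ ε/4 + ε/4 := add_le_add h1 (herr x hx)
      _ ≤ ε := by linarith
end
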